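/- arXiv:0705.2071 — 5 statements merged into one kernel-verified Lean document; each statement's English description precedes it below -/
import Mathlib

section
/- Let λ = Σ_{i=1}^{n} λ_i Λ_i be a dominant integral weight of sl_{n+1} and for 1 ≤ i ≤ j ≤ n define ω_{i,j} := (s_i s_{i+1} ⋯ s_j)(s_1 s_2 ⋯ s_{j-1})(s_1 s_2 ⋯ s_{j-2}) ⋯ (s_1 s_2) s_1 in the Weyl group. Then for i ≠ 1, ⟨ω_{i,j} λ, α_{i-1}^∨⟩ = λ_{j-i+2} + λ_{j-i+3} + ⋯ + λ_j. -/
/-- The type `A` Cartan matrix entry `𝔞_{i,j}` (1-indexed). -/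
def carA (i j : ℕ) : ℤ := if i = j then 2 else if i = j + 1 ∨ j = i + 1 then -1 else 0

/-- The simple reflection `s_i` acting on a weight, written in the coordinates
`v j = ⟨v, α_j^∨⟩`: `(s_i v) j = v j - ⟨v, α_i^∨⟩ · ⟨α_i, α_j^∨⟩`. -/
def srefl (i : ℕ) (v : ℕ → ℤ) : ℕ → ℤ := fun j => v j - v i * carA j i

/-- The list `[a, a+1, …, b]`. -/
def seg (a b : ℕ) : List ℕ := List.range' a (b + 1 - a)

/-- The word `ω_{i,j} = (s_i s_{i+1} ⋯ s_j)(s_1 ⋯ s_{j-1})(s_1 ⋯ s_{j-2}) ⋯ (s_1 s_2) s_1`. -/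
def weylWord (i j : ℕ) : List ℕ :=
  seg i j ++ (((List.range (j - 1)).reverse.map (fun m => seg 1 (m + 1))).flatten)

/-- Applying the word `w = s_{i_1} ⋯ s_{i_k}` to a weight `v`. -/
def applyWord (w : List ℕ) (v : ℕ → ℤ) : ℕ → ℤ := w.foldr srefl v

/-! Auxiliary development: reflections act as swaps in `ε`-coordinates. -/

/-- The transposition `i ↔ i+1` as a function on `ℕ`. -/
def sw (i : ℕ) : ℕ → ℕ := fun c => if c = i then i + 1 else if c = i + 1 then i else c

/-- The permutation of a word, as a composite of adjacent transpositions. -/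
def perm (w : List ℕ) : ℕ → ℕ := w.foldr (fun i f c => f (sw i c)) id

lemma perm_nil (c : ℕ) : perm [] c = c := rfl

lemma perm_cons (i : ℕ) (w : List ℕ) (c : ℕ) : perm (i :: w) c = perm w (sw i c) := rfl

lemma perm_append (w₁ w₂ : List ℕ) (c : ℕ) :
    perm (w₁ ++ w₂) c = perm w₂ (perm w₁ c) := by
  induction w₁ generalizing c with
  | nil => rfl
  | cons i w ih => simp [perm_cons, ih]

lemma carA_diag (i : ℕ) : carA i i = 2 := by simp [carA]

lemma carA_up (i : ℕ) : carA (i + 1) i = -1 := by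
  unfold carA
  rw [if_neg (by omega), if_pos (Or.inl rfl)]

lemma carA_down (i : ℕ) : carA i (i + 1) = -1 := by
  unfold carA
  rw [if_neg (by omega), if_pos (Or.inr rfl)]

lemma carA_far (c i : ℕ) (h1 : c ≠ i) (h2 : c ≠ i + 1) (h3 : i ≠ c + 1) : carA c i = 0 := by
  unfold carA
  rw [if_neg h1, if_neg (by tauto)]

lemma sw_lo (i : ℕ) : sw i i = i + 1 := by simp [sw]

lemma sw_hi (i : ℕ) : sw i (i + 1) = i := by
  unfold sw
  rw [if_neg (by omega), if_pos rfl]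

lemma sw_fix (i c : ℕ) (h1 : c ≠ i) (h2 : c ≠ i + 1) : sw i c = c := by
  unfold sw
  rw [if_neg h1, if_neg h2]

/-- Key lemma: in `ε`-coordinates a word acts by its permutation. -/
lemma applyWord_eps (w : List ℕ) (x : ℕ → ℤ) (c : ℕ) :
    applyWord w (fun c => x c - x (c + 1)) c = x (perm w c) - x (perm w (c + 1)) := by
  induction w generalizing c with
  | nil => rfl
  | cons i w ih =>
    show srefl i (applyWord w fun c => x c - x (c + 1)) c = _
    unfold srefl
    rw [ih, ih, perm_cons, perm_cons]
    by_cases h1 : c = i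
    · subst h1
      rw [carA_diag, sw_lo, sw_hi]
      ring
    · by_cases h2 : c = i + 1
      · subst h2
        rw [carA_up, sw_hi, sw_fix i (i + 1 + 1) (by omega) (by omega)]
        ring
      · by_cases h3 : i = c + 1
        · subst h3
          rw [carA_down, sw_fix (c + 1) c (by omega) (by omega), sw_lo]
          ring
        · rw [carA_far c i h1 h2 h3, sw_fix i c h1 h2,
            sw_fix i (c + 1) (by omega) (by omega)]
          ring

/-- The permutation of `range' a n` is the cycle `a ↦ a+n, c ↦ c-1` for `a < c ≤ a+n`. -/
lemma perm_range' : ∀ n a c : ℕ,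
    perm (List.range' a n) c =
      if c = a ∧ n ≠ 0 then a + n else if a < c ∧ c ≤ a + n then c - 1 else c := by
  intro n
  induction n with
  | zero =>
    intro a c
    rw [List.range'_zero, perm_nil]
    split_ifs <;> omega
  | succ n ih =>
    intro a c
    rw [List.range'_succ, perm_cons, ih]
    unfold sw
    split_ifs <;> omega

lemma perm_seg (a b c : ℕ) :
    perm (seg a b) c =
      if c = a ∧ a ≤ b then b + 1 else if a < c ∧ c ≤ b + 1 then c - 1 else c := by
  unfold seg
  rw [perm_range']
  split_ifs <;> omega

/-- The tail part of `weylWord`. -/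
def tailW (t : ℕ) : List ℕ := ((List.range t).reverse.map (fun m => seg 1 (m + 1))).flatten

/-- The tail permutation reverses `[1, …, t+1]`. -/
lemma perm_tailW : ∀ t c : ℕ,
    perm (tailW t) c = if 1 ≤ c ∧ c ≤ t + 1 then t + 2 - c else c := by
  intro t
  induction t with
  | zero =>
    intro c
    show perm [] c = _
    rw [perm_nil]
    split_ifs <;> omega
  | succ t ih =>
    intro c
    have h : tailW (t + 1) = seg 1 (t + 1) ++ tailW t := by
      unfold tailW
      rw [List.range_succ, List.reverse_append]
      simp
    rw [h, perm_append, perm_seg, ih]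
    split_ifs <;> omega


/-- Coordinates `≥ 1` of `applyWord` only depend on coordinates `≥ 1` of the weight,
provided all letters are `≥ 1`. -/
lemma applyWord_congr (w : List ℕ) (hw : ∀ a ∈ w, 1 ≤ a) (v v' : ℕ → ℤ)
    (h : ∀ c, 1 ≤ c → v c = v' c) : ∀ c, 1 ≤ c → applyWord w v c = applyWord w v' c := by
  induction w with
  | nil => exact h
  | cons i w ih =>
    intro c hc
    have hi : 1 ≤ i := hw i List.mem_cons_self
    have ih' := ih (fun a ha => hw a (List.mem_cons_of_mem i ha))
    show srefl i (applyWord w v) c = srefl i (applyWord w v') c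
    unfold srefl
    rw [ih' c hc, ih' i hi]

lemma weylWord_pos (i j : ℕ) (hi : 1 ≤ i) : ∀ a ∈ weylWord i j, 1 ≤ a := by
  intro a ha
  unfold weylWord at ha
  rcases List.mem_append.1 ha with h | h
  · unfold seg at h
    have := List.mem_range'_1.1 h
    omega
  · rcases List.mem_flatten.1 h with ⟨l, hl, hal⟩
    rcases List.mem_map.1 hl with ⟨m, _, rfl⟩
    unfold seg at hal
    have := List.mem_range'_1.1 hal
    omega

/-- For a dominant integral weight `λ = Σ λ_i Λ_i` of `sl_{n+1}` and `2 ≤ i ≤ j ≤ n`: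
`⟨ω_{i,j} λ, α_{i-1}^∨⟩ = λ_{j-i+2} + λ_{j-i+3} + ⋯ + λ_j`. -/
theorem stmt2 (n : ℕ) (lam : ℕ → ℤ) (hdom : ∀ k, 0 ≤ lam k)
    (i j : ℕ) (h2 : 2 ≤ i) (hij : i ≤ j) (hj : j ≤ n) :
    applyWord (weylWord i j) lam (i - 1) = ∑ k ∈ Finset.Icc (j - i + 2) j, lam k := by
  set x : ℕ → ℤ := fun c => -(∑ k ∈ Finset.Icc 1 (c - 1), lam k) with hx
  have hlam : ∀ c : ℕ, 1 ≤ c → lam c = x c - x (c + 1) := by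
    intro c hc
    obtain ⟨d, rfl⟩ : ∃ d, c = d + 1 := ⟨c - 1, by omega⟩
    simp only [hx, Nat.add_sub_cancel]
    rw [Finset.sum_Icc_succ_top (by omega : 1 ≤ d + 1)]
    ring
  have h1 : applyWord (weylWord i j) lam (i - 1)
      = applyWord (weylWord i j) (fun c => x c - x (c + 1)) (i - 1) := by
    apply applyWord_congr _ (weylWord_pos i j (by omega)) _ _ _ _ (by omega)
    intro c hc
    exact hlam c hc
  rw [h1, applyWord_eps]
  have hiw : i - 1 + 1 = i := by omega
  rw [hiw]
  have hw : weylWord i j = seg i j ++ tailW (j - 1) := rfl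
  rw [hw, perm_append, perm_append, perm_seg, perm_seg]
  rw [if_neg (by omega), if_neg (by omega), if_pos ⟨rfl, hij⟩]
  rw [perm_tailW, perm_tailW]
  rw [if_pos (by omega), if_neg (by omega)]
  have e1 : j - 1 + 2 - (i - 1) = j - i + 2 := by omega
  rw [e1]
  simp only [hx]
  have e2 : j - i + 2 - 1 = j - i + 1 := by omega
  have e3 : j + 1 - 1 = j := by omega
  rw [e2, e3]
  have hsplit : (∑ k ∈ Finset.Icc 1 (j - i + 1), lam k)
      + ∑ k ∈ Finset.Icc (j - i + 2) j, lam k = ∑ k ∈ Finset.Icc 1 j, lam k := by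
    rw [← Finset.Ico_add_one_right_eq_Icc, ← Finset.Ico_add_one_right_eq_Icc, ← Finset.Ico_add_one_right_eq_Icc,
      show j - i + 1 + 1 = j - i + 2 from rfl]
    exact Finset.sum_Ico_consecutive lam (by omega) (by omega)
  linarith [hsplit]
end

section
/- Let λ = Σ_{i=1}^{n} λ_i Λ_i be a dominant integral weight of sl_{n+1} and for 1 ≤ j ≤ n define ω_{1,j} := (s_1 s_2 ⋯ s_j)(s_1 s_2 ⋯ s_{j-1}) ⋯ (s_1 s_2) s_1 in the Weyl group. Then for j ≤ n-1, ⟨ω_{1,j} λ, α_{j+1}^∨⟩ = λ_1 + λ_2 + ⋯ + λ_{j+1}. -/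
/-- Closed form for the intermediate weights `s_a s_{a+1} ⋯ s_J (ω_{1,J-1} λ)`. -/
def G (lam : ℕ → ℤ) (J a k : ℕ) : ℤ :=
  if k + 2 ≤ a then -lam (J - k)
  else if k + 1 = a then ∑ i ∈ Finset.Icc (J - k + 1) J, lam i
  else if k = a ∧ k ≤ J then -∑ i ∈ Finset.Icc (J - k + 1) J, lam i
  else if k ≤ J then -lam (J + 1 - k)
  else if k = J + 1 then (if a ≤ J then ∑ i ∈ Finset.Icc 1 (J + 1), lam i else lam (J + 1))
  else lam k

/-- Closed form for `ω_{1,j} λ`. -/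
def Fw (lam : ℕ → ℤ) (j k : ℕ) : ℤ :=
  if k ≤ j then -lam (j + 1 - k)
  else if k = j + 1 then ∑ i ∈ Finset.Icc 1 (j + 1), lam i
  else lam k

lemma sum_bot (lam : ℕ → ℤ) (m J : ℕ) (h : m ≤ J) :
    ∑ i ∈ Finset.Icc m J, lam i = lam m + ∑ i ∈ Finset.Icc (m + 1) J, lam i := by
  have hins : Finset.Icc m J = insert m (Finset.Icc (m + 1) J) := by
    ext x; simp only [Finset.mem_Icc, Finset.mem_insert]; omega
  rw [hins, Finset.sum_insert (by simp only [Finset.mem_Icc]; omega)]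

lemma stepG (lam : ℕ → ℤ) (J a k : ℕ) (h1 : 1 ≤ a) (haJ : a ≤ J) (hk : 1 ≤ k) :
    G lam J (a + 1) k - G lam J (a + 1) a * carA k a = G lam J a k := by
  have hGa : G lam J (a + 1) a = ∑ i ∈ Finset.Icc (J - a + 1) J, lam i := by
    simp only [G]
    rw [if_neg (by omega)]
    simp
  rw [hGa]
  by_cases hR1 : k + 2 ≤ a
  · -- far below: nothing changes
    have hc : carA k a = 0 := by simp only [carA]; rw [if_neg (by omega), if_neg (by omega)]
    simp only [G]
    rw [if_pos (by omega), if_pos hR1, hc]; ring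
  · by_cases hR2 : k + 1 = a
    · -- k = a - 1
      have hc : carA k a = -1 := by simp only [carA]; rw [if_neg (by omega), if_pos (by omega)]
      have hL : G lam J (a + 1) k = -lam (J - k) := by
        simp only [G]; rw [if_pos (by omega)]
      have hR : G lam J a k = ∑ i ∈ Finset.Icc (J - k + 1) J, lam i := by
        simp only [G]; rw [if_neg (by omega), if_pos hR2]
      rw [hL, hR, hc]
      have e1 : J - a + 1 = J - k := by omega
      rw [e1, sum_bot lam (J - k) J (by omega)]
      ring
    · by_cases hR3 : k = a
      · have hc : carA k a = 2 := by simp only [carA]; rw [if_pos hR3]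
        have hL : G lam J (a + 1) k = ∑ i ∈ Finset.Icc (J - k + 1) J, lam i := by
          simp only [G]; rw [if_neg (by omega), if_pos (by omega)]
        have hR : G lam J a k = -∑ i ∈ Finset.Icc (J - k + 1) J, lam i := by
          simp only [G]; rw [if_neg (by omega), if_neg (by omega), if_pos ⟨hR3, by omega⟩]
        rw [hL, hR, hc]
        have e1 : J - a + 1 = J - k + 1 := by omega
        rw [e1]; ring
      · by_cases hR4 : k = a + 1
        · have hc : carA k a = -1 := by
            simp only [carA]; rw [if_neg (by omega), if_pos (by omega)]
          by_cases hkJ : k ≤ J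
          · -- k = a + 1 ≤ J
            have hL : G lam J (a + 1) k = -∑ i ∈ Finset.Icc (J - k + 1) J, lam i := by
              simp only [G]
              rw [if_neg (by omega), if_neg (by omega), if_pos ⟨hR4, hkJ⟩]
            have hR : G lam J a k = -lam (J + 1 - k) := by
              simp only [G]
              rw [if_neg (by omega), if_neg (by omega), if_neg (by omega), if_pos hkJ]
            rw [hL, hR, hc]
            have e1 : J - a + 1 = (J - k + 1) + 1 := by omega
            rw [e1, sum_bot lam (J - k + 1) J (by omega)]
            have e2 : J + 1 - k = J - k + 1 := by omega
            rw [e2]; ring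
          · -- k = a + 1 = J + 1, i.e. a = J
            have hkJ1 : k = J + 1 := by omega
            have hL : G lam J (a + 1) k = lam (J + 1) := by
              simp only [G]
              rw [if_neg (by omega), if_neg (by omega), if_neg (by omega), if_neg (by omega),
                if_pos hkJ1, if_neg (by omega)]
            have hR : G lam J a k = ∑ i ∈ Finset.Icc 1 (J + 1), lam i := by
              simp only [G]
              rw [if_neg (by omega), if_neg (by omega), if_neg (by omega), if_neg (by omega),
                if_pos hkJ1, if_pos (by omega)]
            rw [hL, hR, hc]
            have e1 : J - a + 1 = 1 := by omega
            rw [e1, Finset.sum_Icc_succ_top (by omega : 1 ≤ J + 1)]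
            ring
        · -- k ≥ a + 2 : nothing changes
          have hge : a + 2 ≤ k := by omega
          have hc : carA k a = 0 := by
            simp only [carA]; rw [if_neg (by omega), if_neg (by omega)]
          rw [hc]
          by_cases hkJ : k ≤ J
          · have hL : G lam J (a + 1) k = -lam (J + 1 - k) := by
              simp only [G]
              rw [if_neg (by omega), if_neg (by omega), if_neg (by omega), if_pos hkJ]
            have hR : G lam J a k = -lam (J + 1 - k) := by
              simp only [G]
              rw [if_neg (by omega), if_neg (by omega), if_neg (by omega), if_pos hkJ]
            rw [hL, hR]; ring
          · by_cases hkJ1 : k = J + 1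
            · have hL : G lam J (a + 1) k = ∑ i ∈ Finset.Icc 1 (J + 1), lam i := by
                simp only [G]
                rw [if_neg (by omega), if_neg (by omega), if_neg (by omega), if_neg (by omega),
                  if_pos hkJ1, if_pos (by omega)]
              have hR : G lam J a k = ∑ i ∈ Finset.Icc 1 (J + 1), lam i := by
                simp only [G]
                rw [if_neg (by omega), if_neg (by omega), if_neg (by omega), if_neg (by omega),
                  if_pos hkJ1, if_pos (by omega)]
              rw [hL, hR]; ring
            · have hL : G lam J (a + 1) k = lam k := by
                simp only [G]
                rw [if_neg (by omega), if_neg (by omega), if_neg (by omega), if_neg (by omega),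
                  if_neg hkJ1]
              have hR : G lam J a k = lam k := by
                simp only [G]
                rw [if_neg (by omega), if_neg (by omega), if_neg (by omega), if_neg (by omega),
                  if_neg hkJ1]
              rw [hL, hR]; ring

lemma inner (lam : ℕ → ℤ) (J : ℕ) (w : ℕ → ℤ)
    (hw : ∀ k, 1 ≤ k → w k = G lam J (J + 1) k) :
    ∀ d a, a + d = J + 1 → 1 ≤ a → ∀ k, 1 ≤ k →
      applyWord (List.range' a d) w k = G lam J a k := by
  intro d
  induction d with
  | zero =>
    intro a ha h1 k hk
    have : a = J + 1 := by omega
    subst this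
    simpa [applyWord] using hw k hk
  | succ d ih =>
    intro a ha h1 k hk
    rw [List.range'_succ]
    have happ : applyWord (a :: List.range' (a + 1) d) w
        = srefl a (applyWord (List.range' (a + 1) d) w) := rfl
    rw [happ]
    show (applyWord (List.range' (a + 1) d) w) k
        - (applyWord (List.range' (a + 1) d) w) a * carA k a = _
    rw [ih (a + 1) (by omega) (by omega) k hk, ih (a + 1) (by omega) (by omega) a h1]
    exact stepG lam J a k h1 (by omega) hk

lemma G_top (lam : ℕ → ℤ) (J k : ℕ) (hJ : 1 ≤ J) (hk : 1 ≤ k) :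
    G lam J (J + 1) k = Fw lam (J - 1) k := by
  have e2 : J - 1 + 1 = J := by omega
  by_cases h1 : k + 2 ≤ J + 1
  · have hL : G lam J (J + 1) k = -lam (J - k) := by
      simp only [G]; rw [if_pos h1]
    have hR : Fw lam (J - 1) k = -lam (J - k) := by
      simp only [Fw]
      rw [if_pos (by omega)]
      congr 2; omega
    rw [hL, hR]
  · by_cases h2 : k + 1 = J + 1
    · have hL : G lam J (J + 1) k = ∑ i ∈ Finset.Icc 1 J, lam i := by
        simp only [G]
        rw [if_neg h1, if_pos h2]
        congr 2; omega
      have hR : Fw lam (J - 1) k = ∑ i ∈ Finset.Icc 1 J, lam i := by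
        simp only [Fw]
        rw [if_neg (by omega), if_pos (by omega), e2]
      rw [hL, hR]
    · have hL : G lam J (J + 1) k = lam k := by
        simp only [G]
        rw [if_neg h1, if_neg h2, if_neg (by omega), if_neg (by omega)]
        by_cases h3 : k = J + 1
        · rw [if_pos h3, if_neg (by omega), h3]
        · rw [if_neg h3]
      have hR : Fw lam (J - 1) k = lam k := by
        simp only [Fw]
        rw [if_neg (by omega), if_neg (by omega)]
      rw [hL, hR]

lemma G_one (lam : ℕ → ℤ) (J k : ℕ) (hJ : 1 ≤ J) (hk : 1 ≤ k) :
    G lam J 1 k = Fw lam J k := by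
  by_cases h1 : k = 1 ∧ k ≤ J
  · obtain ⟨hk1, hkJ⟩ := h1
    have hL : G lam J 1 k = -lam J := by
      simp only [G]
      rw [if_neg (by omega), if_neg (by omega), if_pos ⟨hk1, hkJ⟩,
        show J - k + 1 = J from by omega, Finset.Icc_self, Finset.sum_singleton]
    have hR : Fw lam J k = -lam J := by
      simp only [Fw]
      rw [if_pos hkJ]
      congr 2; omega
    rw [hL, hR]
  · by_cases h2 : k ≤ J
    · have hL : G lam J 1 k = -lam (J + 1 - k) := by
        simp only [G]
        rw [if_neg (by omega), if_neg (by omega), if_neg h1, if_pos h2]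
      have hR : Fw lam J k = -lam (J + 1 - k) := by
        simp only [Fw]; rw [if_pos h2]
      rw [hL, hR]
    · by_cases h3 : k = J + 1
      · have hL : G lam J 1 k = ∑ i ∈ Finset.Icc 1 (J + 1), lam i := by
          simp only [G]
          rw [if_neg (by omega), if_neg (by omega), if_neg h1, if_neg h2, if_pos h3,
            if_pos (by omega)]
        have hR : Fw lam J k = ∑ i ∈ Finset.Icc 1 (J + 1), lam i := by
          simp only [Fw]; rw [if_neg h2, if_pos h3]
        rw [hL, hR]
      · have hL : G lam J 1 k = lam k := by
          simp only [G]
          rw [if_neg (by omega), if_neg (by omega), if_neg h1, if_neg h2, if_neg h3]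
        have hR : Fw lam J k = lam k := by
          simp only [Fw]; rw [if_neg h2, if_neg h3]
        rw [hL, hR]

lemma weylWord_decomp (j : ℕ) (hj : 1 ≤ j) :
    weylWord 1 j = seg 1 j ++ weylWord 1 (j - 1) := by
  rcases j with _ | j
  · omega
  rcases j with _ | m
  · simp [weylWord, seg]
  · simp only [weylWord, Nat.add_sub_cancel]
    rw [List.range_succ, List.reverse_append, List.map_append, List.flatten_append]
    simp [seg]

lemma outer (lam : ℕ → ℤ) : ∀ j, ∀ k, 1 ≤ k →
    applyWord (weylWord 1 j) lam k = Fw lam j k := by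
  intro j
  induction j with
  | zero =>
    intro k hk
    have hw : weylWord 1 0 = [] := rfl
    rw [hw]
    simp only [applyWord, List.foldr_nil, Fw]
    rw [if_neg (by omega)]
    by_cases h : k = 1
    · rw [if_pos h, Finset.Icc_self, Finset.sum_singleton, h]
    · rw [if_neg h]
  | succ j ih =>
    intro k hk
    rw [weylWord_decomp (j + 1) (by omega)]
    simp only [Nat.add_sub_cancel]
    have happ : applyWord (seg 1 (j + 1) ++ weylWord 1 j) lam
        = applyWord (seg 1 (j + 1)) (applyWord (weylWord 1 j) lam) := by
      simp [applyWord, List.foldr_append]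
    rw [happ]
    have hseg : seg 1 (j + 1) = List.range' 1 (j + 1) := rfl
    rw [hseg]
    have hw : ∀ m, 1 ≤ m → applyWord (weylWord 1 j) lam m = G lam (j + 1) (j + 2) m := by
      intro m hm
      rw [ih m hm, G_top lam (j + 1) m (by omega) hm, Nat.add_sub_cancel]
    rw [inner lam (j + 1) _ hw (j + 1) 1 (by omega) (by omega) k hk]
    exact G_one lam (j + 1) k (by omega) hk

/-- For a dominant integral weight `λ = Σ λ_i Λ_i` of `sl_{n+1}` and `1 ≤ j ≤ n-1`:
`⟨ω_{1,j} λ, α_{j+1}^∨⟩ = λ_1 + λ_2 + ⋯ + λ_{j+1}`. -/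
theorem stmt3 (n : ℕ) (lam : ℕ → ℤ) (hdom : ∀ k, 0 ≤ lam k)
    (j : ℕ) (hj1 : 1 ≤ j) (hjn : j ≤ n - 1) :
    applyWord (weylWord 1 j) lam (j + 1) = ∑ k ∈ Finset.Icc 1 (j + 1), lam k := by
  rw [outer lam j (j + 1) (by omega)]
  simp only [Fw]
  rw [if_neg (by omega)]
  simp
end

section
/- Let ξ ∈ {1,...,n}, 1 ≤ i ≤ j ≤ n, and let ω_{i,j} := (s_i⋯s_j)(s_1⋯s_{j-1})(s_1⋯s_{j-2})⋯(s_1 s_2)s_1 in the Weyl group of sl_{n+1}. Acting on the ξ-subsets realization of the fundamental representation via the extremal vector construction (applying divided powers of F along the reduced word), the extremal vector J_H^ξ(ω_{i,j}) equals: {1,...,ξ} if j < ξ; {j+2-ξ, j+3-ξ, ..., j+1} if ξ ≤ j and i ≤ j+1-ξ; and {j+1-ξ,...,i-1, i+1,...,j+1} if ξ ≤ j and j+1-ξ < i. -/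
/-- One extremal-vector step in the `ξ`-subset realization of `L_q(Λ_ξ)`: the divided
power `F_i^{(m)}` (with `m = ⟨wt(J), α_i^∨⟩ ∈ {0,1}` along a reduced word) sends the
subset `J` to `(J∖{i}) ∪ {i+1}` if `i ∈ J` and `i+1 ∉ J`, and fixes `J` otherwise. -/
def stepF (i : ℕ) (J : Finset ℕ) : Finset ℕ :=
  if i ∈ J ∧ i + 1 ∉ J then insert (i + 1) (J.erase i) else J

lemma mem_seg {x a b : ℕ} : x ∈ seg a b ↔ a ≤ x ∧ x ≤ b := by
  rw [seg, List.mem_range'_1]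
  omega

lemma seg_nil {a b : ℕ} (h : b + 1 ≤ a) : seg a b = [] := by
  have : b + 1 - a = 0 := by omega
  simp [seg, this]

lemma seg_succ {a b : ℕ} (h : a ≤ b + 1) : seg a (b + 1) = seg a b ++ [b + 1] := by
  have h1 : b + 1 + 1 - a = (b + 1 - a) + 1 := by omega
  have h2 : a + (b + 1 - a) = b + 1 := by omega
  rw [seg, h1, List.range'_1_concat, h2, seg]

lemma foldr_noop (l : List ℕ) (J : Finset ℕ) (h : ∀ x ∈ l, x ∈ J → x + 1 ∈ J) :
    l.foldr stepF J = J := by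
  induction l with
  | nil => rfl
  | cons a l ih =>
    rw [List.foldr_cons, ih (fun x hx => h x (List.mem_cons_of_mem _ hx)), stepF, if_neg]
    have := h a List.mem_cons_self
    tauto

lemma sweep : ∀ m a c d : ℕ, 1 ≤ c → c ≤ m → m ≤ d → a ≤ m →
    (seg a m).foldr stepF ((Finset.Icc c (d + 1)).erase (m + 1)) =
      (Finset.Icc c (d + 1)).erase (max a c) := by
  intro m
  induction m with
  | zero => intro a c d hc hcm _ _; omega
  | succ k ih =>
    intro a c d hc hcm hmd ham
    rw [seg_succ (by omega), List.foldr_append]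
    have hstep : List.foldr stepF ((Finset.Icc c (d + 1)).erase (k + 1 + 1)) [k + 1] =
        (Finset.Icc c (d + 1)).erase (k + 1) := by
      have hmem : k + 1 ∈ (Finset.Icc c (d + 1)).erase (k + 1 + 1) :=
        Finset.mem_erase.mpr ⟨by omega, Finset.mem_Icc.mpr ⟨hcm, by omega⟩⟩
      rw [List.foldr_cons, List.foldr_nil, stepF]
      rw [if_pos ⟨hmem, Finset.notMem_erase _ _⟩,Finset.erase_right_comm, Finset.insert_erase
        (Finset.mem_erase.mpr ⟨by omega, Finset.mem_Icc.mpr ⟨by omega, by omega⟩⟩)]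
    rw [hstep]
    rcases Nat.lt_or_ge a (k + 1) with ha | ha
    · -- a ≤ k
      rcases Nat.lt_or_ge c (k + 1) with hck | hck
      · -- c ≤ k : recurse
        exact ih a c d hc (by omega) (by omega) (by omega)
      · -- c = k + 1 : everything remaining is a no-op
        have hc' : c = k + 1 := by omega
        rw [foldr_noop]
        · have : max a c = c := by omega
          rw [this, hc']
        · intro x hx hxJ
          exfalso
          rw [mem_seg] at hx
          have := (Finset.mem_Icc.mp (Finset.mem_of_mem_erase hxJ)).1
          omega
    · -- a = k + 1 : no letters left
      have ha' : a = k + 1 := by omega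
      rw [ha', seg_nil (by omega)]
      have hm : max (k + 1) c = k + 1 := by omega
      rw [List.foldr_nil, hm]

lemma sweep_Icc {a c j : ℕ} (hc : 1 ≤ c) (hcj : c ≤ j) (haj : a ≤ j) :
    (seg a j).foldr stepF (Finset.Icc c j) =
      (Finset.Icc c (j + 1)).erase (max a c) := by
  have h : Finset.Icc c j = (Finset.Icc c (j + 1)).erase (j + 1) := by
    rw [Finset.Icc_erase_right, Finset.Ico_add_one_right_eq_Icc]
  rw [h, sweep j a c j hc hcj le_rfl haj]

lemma blocks (ξ : ℕ) (hξ : 1 ≤ ξ) : ∀ j : ℕ, 1 ≤ j →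
    (((List.range (j - 1)).reverse.map (fun m => seg 1 (m + 1))).flatten).foldr stepF
        (Finset.Icc 1 ξ) =
      if j ≤ ξ then Finset.Icc 1 ξ else Finset.Icc (j + 1 - ξ) j := by
  intro j
  induction j with
  | zero => omega
  | succ k ih =>
    intro _
    rcases Nat.eq_zero_or_pos k with hk | hk
    · subst hk
      simp [hξ]
    · -- k ≥ 1
      have hk1 : k + 1 - 1 = (k - 1) + 1 := by omega
      have hk2 : (k - 1) + 1 = k := by omega
      rw [hk1, List.range_succ, List.reverse_append, List.reverse_singleton,
        List.singleton_append, List.map_cons, List.flatten_cons, List.foldr_append,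
        ih hk, hk2]
      rcases Nat.lt_or_ge ξ (k + 1) with hkξ | hkξ
      · -- k + 1 > ξ : sweep
        have hk' : ¬ (k + 1 ≤ ξ) := by omega
        have hIcc : (if k ≤ ξ then Finset.Icc 1 ξ else Finset.Icc (k + 1 - ξ) k) =
            Finset.Icc (k + 1 - ξ) k := by
          split
          · congr 1 <;> omega
          · rfl
        rw [hIcc, sweep_Icc (by omega) (by omega) (by omega), if_neg hk']
        have hmax : max 1 (k + 1 - ξ) = k + 1 - ξ := by omega
        rw [hmax, Finset.Icc_erase_left, ← Finset.Icc_add_one_left_eq_Ioc]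
        congr 1
        omega
      · -- k + 1 ≤ ξ : no-op
        rw [if_pos (by omega), if_pos (by omega)] at *
        rw [foldr_noop]
        intro x hx hxJ
        rw [mem_seg] at hx
        exact Finset.mem_Icc.mpr ⟨by omega, by omega⟩

/-- The extremal vector `J_H^ξ(ω_{i,j})` of the fundamental representation `L_q(Λ_ξ)`,
obtained from the highest weight vector `J_H^ξ = {1,…,ξ}` by applying the (divided
powers of the) operators `F` along the reduced word `ω_{i,j}`, equals `{1,…,ξ}` if
`j < ξ`; `{j+2-ξ, …, j+1}` if `ξ ≤ j` and `i ≤ j + 1 - ξ`; and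
`{j+1-ξ,…,i-1,i+1,…,j+1}` if `ξ ≤ j` and `j+1-ξ < i`. -/
theorem stmt11 (n ξ i j : ℕ) (hξ1 : 1 ≤ ξ) (hξn : ξ ≤ n)
    (hi : 1 ≤ i) (hij : i ≤ j) (hj : j ≤ n) :
    (weylWord i j).foldr stepF (Finset.Icc 1 ξ) =
      if j < ξ then Finset.Icc 1 ξ
      else if i ≤ j + 1 - ξ then Finset.Icc (j + 2 - ξ) (j + 1)
      else (Finset.Icc (j + 1 - ξ) (j + 1)).erase i := by
  have hj1 : 1 ≤ j := le_trans hi hij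
  rw [weylWord, List.foldr_append, blocks ξ hξ1 j hj1]
  rcases Nat.lt_or_ge j ξ with hjξ | hjξ
  · -- j < ξ : everything a no-op
    rw [if_pos (by omega), if_pos hjξ, foldr_noop]
    intro x hx hxJ
    rw [mem_seg] at hx
    exact Finset.mem_Icc.mpr ⟨by omega, by omega⟩
  · -- ξ ≤ j
    have hIcc : (if j ≤ ξ then Finset.Icc 1 ξ else Finset.Icc (j + 1 - ξ) j) =
        Finset.Icc (j + 1 - ξ) j := by
      split
      · congr 1 <;> omega
      · rfl
    rw [hIcc, sweep_Icc (by omega) (by omega) hij, if_neg (by omega)]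
    rcases le_or_gt i (j + 1 - ξ) with hile | higt
    · rw [if_pos hile]
      have hmax : max i (j + 1 - ξ) = j + 1 - ξ := by omega
      rw [hmax, Finset.Icc_erase_left, ← Finset.Icc_add_one_left_eq_Ioc]
      congr 1
      omega
    · rw [if_neg (by omega)]
      have hmax : max i (j + 1 - ξ) = i := by omega
      rw [hmax]
end

section
/- Let ε ∈ ℂ be a primitive l-th root of unity with l odd, l > 1. Suppose a₁,...,a_m ∈ ℂ^× and ξ₁,...,ξ_m ∈ {1,...,n} satisfy: for all r ≠ s with ξ_r = ξ_s, a_s/a_r ≠ ε^{±2}. Then the product polynomial π_i(t) := Π_{k : ξ_k = i} (1 - a_k t) is l-acyclic for every i ∈ {1,...,n}, i.e., π_i(t) is not divisible by (1 - c t^l) for any c ∈ ℂ^×. -/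
open Polynomial

/-- Let `ε` be a primitive `l`-th root of unity (`l` odd, `l > 1`).  If
`a₁,…,a_m ∈ ℂ^×` and `ξ₁,…,ξ_m ∈ {1,…,n}` satisfy `a_s/a_r ≠ ε^{±2}` whenever
`r ≠ s` and `ξ_r = ξ_s`, then each product `π_i(t) = Π_{k : ξ_k = i} (1 - a_k t)`
is `l`-acyclic, i.e. not divisible by `1 - c t^l` for any `c ∈ ℂ^×`. -/
theorem stmt13 (l : ℕ) (hodd : Odd l) (hl : 1 < l) (ε : ℂ) (hε : IsPrimitiveRoot ε l)
    (m n : ℕ) (a : Fin m → ℂ) (ha : ∀ k, a k ≠ 0) (ξ : Fin m → ℕ)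
    (hξ : ∀ k, 1 ≤ ξ k ∧ ξ k ≤ n)
    (hcond : ∀ r s : Fin m, r ≠ s → ξ r = ξ s →
      a s / a r ≠ ε ^ 2 ∧ a s / a r ≠ (ε ^ 2)⁻¹) :
    ∀ i : ℕ, ¬ ∃ c : ℂ, c ≠ 0 ∧
      (1 - C c * X ^ l) ∣
        ∏ k ∈ Finset.univ.filter (fun k => ξ k = i), (1 - C (a k) * X) := by
  intro i
  rintro ⟨c, hc, hdvd⟩
  have hεne : ε ≠ 0 := hε.ne_zero (by omega)
  -- pick an l-th root z of c⁻¹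
  obtain ⟨z, hz⟩ := Complex.isAlgClosed.exists_pow_nat_eq c⁻¹ (by omega : 0 < l)
  have hzne : z ≠ 0 := by
    intro h
    rw [h, zero_pow (by omega : l ≠ 0)] at hz
    exact hc (inv_eq_zero.mp hz.symm)
  have hroot : ∀ w : ℂ, w ^ l = c⁻¹ →
      (∏ k ∈ Finset.univ.filter (fun k => ξ k = i), (1 - C (a k) * X)).eval w = 0 := by
    intro w hw
    obtain ⟨q, hq⟩ := hdvd
    rw [hq, eval_mul]
    have h0 : (1 - C c * X ^ l).eval w = 0 := by
      simp [hw, mul_inv_cancel₀ hc]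
    rw [h0, zero_mul]
  have hε2 : ε ^ 2 ≠ 1 := by
    intro h
    have h2 := Nat.le_of_dvd (by norm_num) ((hε.pow_eq_one_iff_dvd 2).mp h)
    obtain ⟨t, ht⟩ := hodd
    omega
  have h1 := hroot z hz
  have h2 := hroot (ε ^ 2 * z) (by
    rw [mul_pow, ← pow_mul, mul_comm 2 l, pow_mul, hε.pow_eq_one, one_pow, one_mul, hz])
  rw [eval_prod] at h1 h2
  obtain ⟨r, hr, hr0⟩ := Finset.prod_eq_zero_iff.mp h1
  obtain ⟨s, hs, hs0⟩ := Finset.prod_eq_zero_iff.mp h2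
  simp only [eval_sub, eval_one, eval_mul, eval_C, eval_X] at hr0 hs0
  have har : a r * z = 1 := by linear_combination -hr0
  have has : a s * (ε ^ 2 * z) = 1 := by linear_combination -hs0
  have hrs : r ≠ s := by
    rintro rfl
    apply hε2
    calc ε ^ 2 = ε ^ 2 * (a r * z) := by rw [har, mul_one]
    _ = a r * (ε ^ 2 * z) := by ring
    _ = 1 := has
  have hξr : ξ r = i := (Finset.mem_filter.mp hr).2
  have hξs : ξ s = i := (Finset.mem_filter.mp hs).2
  have key : a s * ε ^ 2 = a r := by
    apply mul_right_cancel₀ hzne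
    linear_combination has - har
  apply (hcond r s hrs (hξr.trans hξs.symm)).2
  rw [div_eq_iff (ha r), ← key]
  field_simp
end

section
/- For every monic-at-0 polynomial π(t) ∈ ℂ[t] with π(0) = 1 and every integer l ≥ 1, there exist unique polynomials π⁽⁰⁾(t), π⁽¹⁾(t) ∈ ℂ[t] with π⁽⁰⁾(0) = π⁽¹⁾(0) = 1 such that π = π⁽⁰⁾ · π⁽¹⁾, π⁽⁰⁾ is l-acyclic (not divisible by 1 - c t^l for any c ∈ ℂ^×), and π⁽¹⁾(t) = σ(t^l) for some polynomial σ with σ(0) = 1. -/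
open Polynomial

namespace Stmt14Aux

lemma key_rw (l : ℕ) {c : ℂ} (hc : c ≠ 0) :
    (1 : Polynomial ℂ) - C c * X ^ l = C (-c) * (X ^ l - C c⁻¹) := by
  have h : C (-c) * C (c⁻¹ : ℂ) = -1 := by
    rw [← C_mul]
    field_simp
    simp
  rw [mul_sub, h, map_neg]
  ring

lemma s_natDegree (l : ℕ) {c : ℂ} (hc : c ≠ 0) :
    ((1 : Polynomial ℂ) - C c * X ^ l).natDegree = l := by
  rw [key_rw l hc, natDegree_C_mul (neg_ne_zero.mpr hc), natDegree_X_pow_sub_C]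

lemma s_ne_zero {l : ℕ} (hl : 1 ≤ l) {c : ℂ} (hc : c ≠ 0) :
    (1 : Polynomial ℂ) - C c * X ^ l ≠ 0 := by
  intro h
  have := s_natDegree l hc
  rw [h, natDegree_zero] at this
  omega

lemma s_eval (l : ℕ) (c α : ℂ) :
    ((1 : Polynomial ℂ) - C c * X ^ l).eval α = 1 - c * α ^ l := by
  simp

lemma s_eval_zero {l : ℕ} (hl : 1 ≤ l) (c : ℂ) :
    ((1 : Polynomial ℂ) - C c * X ^ l).eval 0 = 1 := by
  rw [s_eval, zero_pow (by omega : l ≠ 0)]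
  ring

/-- key divisibility characterization -/
lemma dvd_iff {l : ℕ} (hl : 1 ≤ l) {c : ℂ} (hc : c ≠ 0) (q : Polynomial ℂ) :
    ((1 : Polynomial ℂ) - C c * X ^ l) ∣ q ↔ ∀ α : ℂ, c * α ^ l = 1 → q.eval α = 0 := by
  constructor
  · rintro ⟨r, hr⟩ α hα
    rw [hr, eval_mul, s_eval]
    rw [hα]
    ring
  · intro h
    rcases eq_or_ne q 0 with rfl | hq0
    · exact dvd_zero _
    set s : Polynomial ℂ := X ^ l - C c⁻¹ with hs
    have hln : (l : ℂ) ≠ 0 := Nat.cast_ne_zero.mpr (by omega)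
    have hsep : s.Separable := separable_X_pow_sub_C c⁻¹ hln (inv_ne_zero hc)
    have hnodup : s.roots.Nodup := nodup_roots hsep
    have hmono : s.Monic := monic_X_pow_sub_C _ (by omega)
    have hroot_mem : ∀ a : ℂ, a ∈ s.roots → q.eval a = 0 := by
      intro a ha
      rw [mem_roots (hmono.ne_zero)] at ha
      have : a ^ l - c⁻¹ = 0 := by simpa [hs, IsRoot] using ha
      apply h
      have hal : a ^ l = c⁻¹ := by linear_combination this
      rw [hal]
      field_simp
    have hle : s.roots ≤ q.roots := by
      rw [Multiset.le_iff_count]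
      intro a
      by_cases ha : a ∈ s.roots
      · have h1 : s.roots.count a = 1 := Multiset.count_eq_one_of_mem hnodup ha
        rw [h1, Multiset.one_le_count_iff_mem, mem_roots hq0]
        exact hroot_mem a ha
      · simp [Multiset.count_eq_zero_of_notMem ha]
    have hd1 : (s.roots.map fun a => X - C a).prod ∣ q :=
      dvd_trans (Multiset.prod_dvd_prod_of_le (Multiset.map_le_map hle))
        (prod_multiset_X_sub_C_dvd q)
    have hsplit : s.Splits := IsAlgClosed.splits s
    have hseq : s = (s.roots.map fun a => X - C a).prod :=
      hsplit.eq_prod_roots_of_monic hmono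
    have hsd : s ∣ q := hseq ▸ hd1
    rw [key_rw l hc]
    exact (IsUnit.mul_left_dvd (isUnit_C.mpr (IsUnit.mk0 _ (neg_ne_zero.mpr hc)))).mpr hsd
  
lemma comp_eval (l : ℕ) (σ : Polynomial ℂ) (α : ℂ) :
    (σ.comp (X ^ l)).eval α = σ.eval (α ^ l) := by
  simp [eval_comp]

lemma comp_eval_zero {l : ℕ} (hl : 1 ≤ l) (σ : Polynomial ℂ) :
    (σ.comp (X ^ l)).eval 0 = σ.eval 0 := by
  rw [comp_eval, zero_pow (by omega : l ≠ 0)]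

lemma mul_comp_s (l : ℕ) (c : ℂ) (τ : Polynomial ℂ) :
    ((1 - C c * X) * τ).comp (X ^ l) = (1 - C c * X ^ l) * τ.comp (X ^ l) := by
  simp [mul_comp, sub_comp]

/-- linear divisibility characterization -/
lemma lin_dvd_iff {c : ℂ} (hc : c ≠ 0) (σ : Polynomial ℂ) :
    ((1 : Polynomial ℂ) - C c * X) ∣ σ ↔ σ.eval c⁻¹ = 0 := by
  have := dvd_iff (l := 1) le_rfl hc σ
  rw [pow_one] at this
  rw [this]
  constructor
  · intro h
    apply h
    field_simp
  · intro h α hα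
    have : α = c⁻¹ := by field_simp; linear_combination hα
    rwa [this]

/-- if p is l-acyclic, the second factor must be 1 -/
lemma b_eq_one {l : ℕ} (hl : 1 ≤ l) {p a b : Polynomial ℂ}
    (hac : ∀ c : ℂ, c ≠ 0 → ¬ ((1 - C c * X ^ l) ∣ p))
    (hb0 : b.eval 0 = 1) (hab : p = a * b)
    (hσ : ∃ σ : Polynomial ℂ, σ.eval 0 = 1 ∧ b = σ.comp (X ^ l)) :
    b = 1 := by
  obtain ⟨σ, hσ0, rfl⟩ := hσ
  by_cases hdeg : σ.natDegree = 0
  · have : σ = C (σ.coeff 0) := eq_C_of_natDegree_eq_zero hdeg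
    rw [coeff_zero_eq_eval_zero, hσ0] at this
    rw [this]
    simp
  · exfalso
    have hσne : σ ≠ 0 := fun h => by simp [h] at hσ0
    have : σ.degree ≠ 0 := by
      rw [degree_eq_natDegree hσne]
      exact_mod_cast hdeg
    obtain ⟨γ, hγ⟩ := IsAlgClosed.exists_root σ this
    have hγ0 : γ ≠ 0 := fun h => by rw [h] at hγ; exact one_ne_zero (hσ0.symm.trans hγ)
    have hdvd : ((1 : Polynomial ℂ) - C γ⁻¹ * X) ∣ σ := by
      rw [lin_dvd_iff (inv_ne_zero hγ0), inv_inv]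
      exact hγ
    obtain ⟨τ, hτ⟩ := hdvd
    apply hac γ⁻¹ (inv_ne_zero hγ0)
    rw [hab, hτ, mul_comp_s]
    exact ⟨a * τ.comp (X ^ l), by ring⟩

/-- key cancellation lemma -/
lemma cancel {l : ℕ} (hl : 1 ≤ l) {c : ℂ} (hc : c ≠ 0) {a b : Polynomial ℂ}
    (hdvd : (1 - C c * X ^ l) ∣ a * b)
    (hb0 : b.eval 0 = 1)
    (hac : ∀ c : ℂ, c ≠ 0 → ¬ ((1 - C c * X ^ l) ∣ a))
    (hσ : ∃ σ : Polynomial ℂ, σ.eval 0 = 1 ∧ b = σ.comp (X ^ l)) :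
    ∃ τ : Polynomial ℂ, τ.eval 0 = 1 ∧ b = (1 - C c * X ^ l) * τ.comp (X ^ l) := by
  obtain ⟨σ, hσ0, rfl⟩ := hσ
  have hroot : σ.eval c⁻¹ = 0 := by
    by_contra hne
    apply hac c hc
    rw [dvd_iff hl hc]
    intro α hα
    have hαl : α ^ l = c⁻¹ := by field_simp; linear_combination hα
    have h1 : (a * σ.comp (X ^ l)).eval α = 0 := by
      rw [dvd_iff hl hc] at hdvd
      exact hdvd α hα
    rw [eval_mul, comp_eval, hαl] at h1
    exact (mul_eq_zero.mp h1).resolve_right hne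
  have hdvdσ : ((1 : Polynomial ℂ) - C c * X) ∣ σ := (lin_dvd_iff hc σ).mpr hroot
  obtain ⟨τ, hτ⟩ := hdvdσ
  refine ⟨τ, ?_, ?_⟩
  · have := hσ0
    rw [hτ, eval_mul] at this
    simpa using this
  · rw [hτ, mul_comp_s]

lemma exists_decomp {l : ℕ} (hl : 1 ≤ l) : ∀ n (p : Polynomial ℂ), p.natDegree = n →
    p.eval 0 = 1 →
    ∃ a b : Polynomial ℂ, a.eval 0 = 1 ∧ b.eval 0 = 1 ∧ p = a * b ∧
      (∀ c : ℂ, c ≠ 0 → ¬ ((1 - C c * X ^ l) ∣ a)) ∧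
      (∃ σ : Polynomial ℂ, σ.eval 0 = 1 ∧ b = σ.comp (X ^ l)) := by
  intro n
  induction n using Nat.strong_induction_on with
  | _ n ih =>
    intro p hdeg hp
    by_cases hac : ∀ c : ℂ, c ≠ 0 → ¬ ((1 - C c * X ^ l) ∣ p)
    · exact ⟨p, 1, hp, by simp, by simp, hac, 1, by simp, by simp⟩
    · push_neg at hac
      obtain ⟨c, hc, q, hq⟩ := hac
      have hq0 : q.eval 0 = 1 := by
        have := hp
        rw [hq, eval_mul, s_eval_zero hl, one_mul] at this
        exact this
      have hqne : q ≠ 0 := fun h => by simp [h] at hq0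
      have hqd : q.natDegree < n := by
        have h1 : p.natDegree = l + q.natDegree := by
          rw [hq, natDegree_mul (s_ne_zero hl hc) hqne, s_natDegree l hc]
        omega
      obtain ⟨a, b, ha0, hb0, hab, hacyc, σ, hσ0, hσ⟩ := ih q.natDegree hqd q rfl hq0
      refine ⟨a, (1 - C c * X ^ l) * b, ha0, ?_, ?_, hacyc, (1 - C c * X) * σ, ?_, ?_⟩
      · rw [eval_mul, s_eval_zero hl, one_mul]
        exact hb0
      · rw [hq, hab]; ring
      · rw [eval_mul]
        simp [hσ0]
      · rw [mul_comp_s, hσ]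

lemma unique_decomp {l : ℕ} (hl : 1 ≤ l) : ∀ n (p : Polynomial ℂ), p.natDegree = n →
    p.eval 0 = 1 →
    ∀ a b a' b' : Polynomial ℂ,
    (a.eval 0 = 1 ∧ b.eval 0 = 1 ∧ p = a * b ∧
      (∀ c : ℂ, c ≠ 0 → ¬ ((1 - C c * X ^ l) ∣ a)) ∧
      (∃ σ : Polynomial ℂ, σ.eval 0 = 1 ∧ b = σ.comp (X ^ l))) →
    (a'.eval 0 = 1 ∧ b'.eval 0 = 1 ∧ p = a' * b' ∧
      (∀ c : ℂ, c ≠ 0 → ¬ ((1 - C c * X ^ l) ∣ a')) ∧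
      (∃ σ : Polynomial ℂ, σ.eval 0 = 1 ∧ b' = σ.comp (X ^ l))) →
    a = a' ∧ b = b' := by
  intro n
  induction n using Nat.strong_induction_on with
  | _ n ih =>
    intro p hdeg hp a b a' b' ⟨ha0, hb0, hab, haca, hσa⟩ ⟨ha0', hb0', hab', haca', hσa'⟩
    by_cases hac : ∀ c : ℂ, c ≠ 0 → ¬ ((1 - C c * X ^ l) ∣ p)
    · have h1 : b = 1 := b_eq_one hl hac hb0 hab hσa
      have h2 : b' = 1 := b_eq_one hl hac hb0' hab' hσa'
      subst h1 h2
      constructor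
      · rw [mul_one] at hab hab'
        rw [← hab, ← hab']
      · rfl
    · push_neg at hac
      obtain ⟨c, hc, hdvd⟩ := hac
      obtain ⟨τ, hτ0, hτ⟩ := cancel hl hc (hab ▸ hdvd) hb0 haca hσa
      obtain ⟨τ', hτ0', hτ'⟩ := cancel hl hc (hab' ▸ hdvd) hb0' haca' hσa'
      have heq : a * τ.comp (X ^ l) = a' * τ'.comp (X ^ l) := by
        apply mul_left_cancel₀ (s_ne_zero hl hc)
        have h1 : p = (1 - C c * X ^ l) * (a * τ.comp (X ^ l)) := by
          rw [hab, hτ]; ring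
        have h2 : p = (1 - C c * X ^ l) * (a' * τ'.comp (X ^ l)) := by
          rw [hab', hτ']; ring
        rw [← h1, ← h2]
      set q := a * τ.comp (X ^ l) with hqdef
      have hq0 : q.eval 0 = 1 := by
        rw [hqdef, eval_mul, comp_eval_zero hl, ha0, hτ0, one_mul]
      have hqne : q ≠ 0 := fun h => by simp [h] at hq0
      have hpq : p = (1 - C c * X ^ l) * q := by rw [hab, hτ, hqdef]; ring
      have hqd : q.natDegree < n := by
        have h1 : p.natDegree = l + q.natDegree := by
          rw [hpq, natDegree_mul (s_ne_zero hl hc) hqne, s_natDegree l hc]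
        omega
      have key := ih q.natDegree hqd q rfl hq0 a (τ.comp (X ^ l)) a' (τ'.comp (X ^ l))
        ⟨ha0, by rw [comp_eval_zero hl]; exact hτ0, rfl, haca, τ, hτ0, rfl⟩
        ⟨ha0', by rw [comp_eval_zero hl]; exact hτ0', heq, haca', τ', hτ0', rfl⟩
      refine ⟨key.1, ?_⟩
      rw [hτ, hτ', key.2]

end Stmt14Aux

/-- For every `π ∈ ℂ[t]` with `π(0) = 1` and every `l ≥ 1`, there is a unique
factorization `π = π⁽⁰⁾ · π⁽¹⁾` with `π⁽⁰⁾(0) = π⁽¹⁾(0) = 1`, `π⁽⁰⁾` `l`-acyclic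
(not divisible by `1 - c t^l` for any `c ∈ ℂ^×`), and `π⁽¹⁾(t) = σ(t^l)` for some
`σ` with `σ(0) = 1`. -/
theorem stmt14 (l : ℕ) (hl : 1 ≤ l) (p : Polynomial ℂ) (hp : p.eval 0 = 1) :
    ∃! pq : Polynomial ℂ × Polynomial ℂ,
      pq.1.eval 0 = 1 ∧ pq.2.eval 0 = 1 ∧ p = pq.1 * pq.2 ∧
      (∀ c : ℂ, c ≠ 0 → ¬ ((1 - C c * X ^ l) ∣ pq.1)) ∧
      (∃ σ : Polynomial ℂ, σ.eval 0 = 1 ∧ pq.2 = σ.comp (X ^ l)) := by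
  obtain ⟨a, b, ha0, hb0, hab, hac, hσ⟩ :=
    Stmt14Aux.exists_decomp hl p.natDegree p rfl hp
  refine ⟨(a, b), ⟨ha0, hb0, hab, hac, hσ⟩, ?_⟩
  rintro ⟨a', b'⟩ ⟨ha0', hb0', hab', hac', hσ'⟩
  have := Stmt14Aux.unique_decomp hl p.natDegree p rfl hp a' b' a b
    ⟨ha0', hb0', hab', hac', hσ'⟩ ⟨ha0, hb0, hab, hac, hσ⟩
  simp [Prod.ext_iff, this.1, this.2]
end
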